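/- For every n ≥ 1 and every Boolean vector b : Fin n → Bool, there exists θ : Fin n → ℝ with θ_p ∈ {0, π/2, 3π/2} for every p, such that: Real.cos(θ_0) = (if b_0 then 0 else 1), Real.sin(θ_0) = (if b_0 then 1 else 0), and for every p ≥ 1: Real.cos(θ_p) = (if b_p then 0 else 1) and Real.cos(π · Real.sin(θ_{p−1})) · Real.sin(θ_p) = (if b_p then 1 else 0). -/

import Mathlib

open Finset Real

lemma cos_three_pi_div_two' : Real.cos (3 * π / 2) = 0 := by
  rw [show (3:ℝ) * π / 2 = π + π / 2 by ring, Real.cos_add]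
  simp

lemma sin_three_pi_div_two' : Real.sin (3 * π / 2) = -1 := by
  rw [show (3:ℝ) * π / 2 = π + π / 2 by ring, Real.sin_add]
  simp

/-- **Lemma 1, linear-entanglement case (combinatorial core).** For every Boolean vector
`b`, the rotation angles can be chosen in `{0, π/2, 3π/2}` so that the first qubit is
`cos θ_0 |0⟩ + sin θ_0 |1⟩ = |b_0⟩` and, for `p ≥ 1`,
`cos θ_p = (if b_p then 0 else 1)` and
`(−1)^{sin θ_{p−1}} sin θ_p = cos(π sin θ_{p−1}) · sin θ_p = (if b_p then 1 else 0)`,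
i.e. the two-local VQC with linear entanglement outputs the computational basis state `|b⟩`. -/
theorem two_local_linear_entanglement_reaches_all_corners
    (n : ℕ) (hn : 1 ≤ n) (b : Fin n → Bool) :
    ∃ θ : Fin n → ℝ,
      (∀ p, θ p = 0 ∨ θ p = π / 2 ∨ θ p = 3 * π / 2) ∧
      Real.cos (θ ⟨0, hn⟩) = (if b ⟨0, hn⟩ then (0 : ℝ) else 1) ∧
      Real.sin (θ ⟨0, hn⟩) = (if b ⟨0, hn⟩ then (1 : ℝ) else 0) ∧
      ∀ p : Fin n, 1 ≤ p.val →
        Real.cos (θ p) = (if b p then (0 : ℝ) else 1) ∧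
        Real.cos (π * Real.sin (θ ⟨p.val - 1, Nat.lt_of_le_of_lt (Nat.sub_le _ _) p.isLt⟩))
            * Real.sin (θ p) = (if b p then (1 : ℝ) else 0) := by
  refine ⟨fun p => if b p then
      (if p.val = 0 then π / 2
       else if b ⟨p.val - 1, Nat.lt_of_le_of_lt (Nat.sub_le _ _) p.isLt⟩ then 3 * π / 2
       else π / 2)
    else 0, ?_, ?_, ?_, ?_⟩
  · intro p
    by_cases hb : b p <;> simp [hb]
    split_ifs <;> simp_all
  · by_cases hb : b ⟨0, hn⟩ <;> simp [hb]
  · by_cases hb : b ⟨0, hn⟩ <;> simp [hb]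
  · intro p hp
    have hp0 : p.val ≠ 0 := by omega
    set q : Fin n := ⟨p.val - 1, Nat.lt_of_le_of_lt (Nat.sub_le _ _) p.isLt⟩ with hq
    by_cases hb : b p <;> by_cases hbq : b q <;>
      simp [hb, hbq, hp0, cos_three_pi_div_two', sin_three_pi_div_two'] <;>
      split_ifs <;>
      norm_num [sin_three_pi_div_two', Real.cos_pi, mul_neg_one, Real.cos_neg, cos_three_pi_div_two'] <;>
      simp_all
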